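/- Let L be a positive integer and W_1, …, W_L i.i.d. standard Gaussian (mean 0, variance 1) random variables. Fix reals x₀ ≠ 0, V, y with (V·x₀, y) ≠ (0, 0), and define δx^L := V·x₀·Π_{k=1}^{L}(1 + W_k/√L) − y and A_L := (1/√L)·δx^L·x₀²·Σ_{l=1}^{L} Π_{k≠l}(1 + W_k/√L)². Then E[A_L²] = Θ(L): there exist constants 0 < K₁ ≤ K₂ (depending on x₀, V, y but not on L) and L₀ such that K₁·L ≤ E[A_L²] ≤ K₂·L for all L ≥ L₀. Consequently, for a learning rate η, E[((η/√L)·A_L)²] = Θ(η²), so η = Θ(1) in L is the maximal learning rate scaling for which the one-step SGD update of the network output stays bounded as L → ∞. -/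

import Mathlib

open MeasureTheory ProbabilityTheory Finset

/-- The joint law of `L` i.i.d. standard Gaussian random variables `W_1, …, W_L`,
realized canonically on `Fin L → ℝ`. -/
noncomputable def stdGaussPi (L : ℕ) : Measure (Fin L → ℝ) :=
  Measure.pi fun _ => gaussianReal 0 1

/-- `A_L = (1/√L) · δx^L · x₀² · ∑_{l=1}^{L} ∏_{k≠l} (1 + W_k/√L)²`, where
`δx^L = V·x₀·∏_{k=1}^{L}(1 + W_k/√L) − y`. -/
noncomputable def ALin (x₀ V y : ℝ) (L : ℕ) (ω : Fin L → ℝ) : ℝ :=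
  (1 / Real.sqrt L) * (V * x₀ * (∏ k, (1 + ω k / Real.sqrt L)) - y) * x₀ ^ 2 *
    ∑ l, ∏ k ∈ Finset.univ.erase l, (1 + ω k / Real.sqrt L) ^ 2


open Real Filter
open scoped ENNReal NNReal


noncomputable def Igauss (n : ℕ) : ℝ := ∫ x : ℝ, x ^ n * Real.exp (-x^2/2)

lemma abs_pow_exp_le (n : ℕ) (x : ℝ) :
    |x| ^ n * Real.exp (-x^2/2) ≤ (1 + 4^n * n.factorial) * Real.exp (-(1/4) * x^2) := by
  have h1 : |x| ^ n ≤ 1 + 4^n * n.factorial * Real.exp (x^2/4) := by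
    rcases le_total (|x|) 1 with h | h
    · have : |x| ^ n ≤ 1 := pow_le_one₀ (abs_nonneg x) h
      nlinarith [Real.exp_pos (x^2/4), (Nat.one_le_iff_ne_zero.2 n.factorial_ne_zero),
        pow_pos (by norm_num : (0:ℝ) < 4) n,
        (by positivity : (0:ℝ) < 4^n * n.factorial * Real.exp (x^2/4))]
    · -- |x| ≥ 1 : |x|^n ≤ x^(2n) = (x²)ⁿ ≤ 4ⁿ (x²/4)ⁿ ≤ 4ⁿ n! e^{x²/4}
      have h2 : |x| ^ n ≤ (x^2) ^ n := by
        apply pow_le_pow_left₀ (abs_nonneg x)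
        nlinarith [abs_nonneg x, sq_abs x]
      have h3 : (x^2/4) ^ n / n.factorial ≤ Real.exp (x^2/4) := by
        have := Real.sum_le_exp_of_nonneg (x := x^2/4) (by positivity) (n+1)
        refine le_trans ?_ this
        exact Finset.single_le_sum (f := fun i => (x^2/4)^i / i.factorial)
          (fun i _ => by positivity) (Finset.self_mem_range_succ n)
      have h4 : (x^2) ^ n = 4^n * (x^2/4)^n := by rw [div_pow]; field_simp
      have hf : (0:ℝ) < n.factorial := by positivity
      calc |x| ^ n ≤ (x^2)^n := h2
        _ = 4^n * (x^2/4)^n := h4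
        _ ≤ 4^n * (n.factorial * Real.exp (x^2/4)) := by
            have := (div_le_iff₀ hf).1 h3
            gcongr
            linarith
        _ ≤ 1 + 4^n * n.factorial * Real.exp (x^2/4) := by
            have h5 : (4:ℝ)^n * (n.factorial * Real.exp (x^2/4))
                = 4^n * n.factorial * Real.exp (x^2/4) := by ring
            rw [h5]; linarith
  calc |x| ^ n * Real.exp (-x^2/2)
      ≤ (1 + 4^n * n.factorial * Real.exp (x^2/4)) * Real.exp (-x^2/2) := by
        apply mul_le_mul_of_nonneg_right h1 (Real.exp_pos _).le
    _ = Real.exp (-x^2/2) + 4^n * n.factorial * (Real.exp (x^2/4) * Real.exp (-x^2/2)) := by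
        ring
    _ = Real.exp (-x^2/2) + 4^n * n.factorial * Real.exp (x^2/4 + -x^2/2) := by
        rw [Real.exp_add]
    _ ≤ Real.exp (-(1/4) * x^2) + 4^n * n.factorial * Real.exp (-(1/4) * x^2) := by
        have e1 : Real.exp (-x^2/2) ≤ Real.exp (-(1/4) * x^2) :=
          Real.exp_le_exp.2 (by nlinarith [sq_nonneg x])
        have e2 : Real.exp (x^2/4 + -x^2/2) ≤ Real.exp (-(1/4) * x^2) :=
          Real.exp_le_exp.2 (by nlinarith [sq_nonneg x])
        have hc : (0:ℝ) ≤ 4^n * n.factorial := by positivity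
        nlinarith [mul_le_mul_of_nonneg_left e2 hc]
    _ = (1 + 4^n * n.factorial) * Real.exp (-(1/4) * x^2) := by ring

lemma integrable_abs_pow_exp (n : ℕ) :
    Integrable (fun x : ℝ => |x| ^ n * Real.exp (-x^2/2)) := by
  apply Integrable.mono' ((integrable_exp_neg_mul_sq (by norm_num : (0:ℝ) < 1/4)).const_mul
    (1 + 4^n * n.factorial))
  · exact ((continuous_abs.pow n).mul ((continuous_id.pow 2).neg.div_const 2).rexp).aestronglyMeasurable
  · refine Filter.Eventually.of_forall fun x => ?_
    rw [Real.norm_eq_abs, abs_of_nonneg (by positivity)]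
    exact abs_pow_exp_le n x

lemma integrable_pow_exp (n : ℕ) :
    Integrable (fun x : ℝ => x ^ n * Real.exp (-x^2/2)) := by
  apply (integrable_abs_pow_exp n).mono'
  · exact ((continuous_id.pow n).mul ((continuous_id.pow 2).neg.div_const 2).rexp).aestronglyMeasurable
  · refine Filter.Eventually.of_forall fun x => ?_
    rw [Real.norm_eq_abs, abs_mul, abs_of_nonneg (Real.exp_pos _).le, abs_pow]

lemma tendsto_pow_exp_atTop (n : ℕ) :
    Tendsto (fun x : ℝ => x ^ n * Real.exp (-x^2/2)) atTop (nhds 0) := by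
  have h := (rpow_mul_exp_neg_mul_sq_isLittleO_exp_neg (by norm_num : (0:ℝ) < 1/2) n)
  have h2 : Tendsto (fun x : ℝ => Real.exp (-(1/2) * x)) atTop (nhds 0) := by
    have hm : Tendsto (fun x : ℝ => (1/2 : ℝ) * x) atTop atTop := by
      exact (tendsto_const_mul_atTop_of_pos (by norm_num)).2 tendsto_id
    have := Real.tendsto_exp_atBot.comp (tendsto_neg_atTop_atBot.comp hm)
    apply this.congr
    intro x
    simp [Function.comp]
  have h3 := h.trans_tendsto h2
  apply h3.congr'
  filter_upwards [eventually_gt_atTop (0:ℝ)] with x hx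
  rw [Real.rpow_natCast]
  ring_nf


lemma tendsto_pow_exp_atBot (n : ℕ) :
    Tendsto (fun x : ℝ => x ^ n * Real.exp (-x^2/2)) atBot (nhds 0) := by
  have h := ((tendsto_pow_exp_atTop n).const_mul ((-1:ℝ)^n)).comp tendsto_neg_atBot_atTop
  simp only [mul_zero] at h
  apply h.congr
  intro x
  simp only [Function.comp]
  rw [neg_pow, neg_sq]
  push_cast
  ring_nf
  rw [mul_comm n 2, pow_mul]
  norm_num

lemma hasDerivAt_pow_exp (n : ℕ) (x : ℝ) :
    HasDerivAt (fun x : ℝ => x ^ n * Real.exp (-x^2/2))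
      ((n : ℝ) * x ^ (n-1) * Real.exp (-x^2/2) - x ^ (n+1) * Real.exp (-x^2/2)) x := by
  have h1 : HasDerivAt (fun x : ℝ => x ^ n) ((n:ℝ) * x ^ (n-1)) x := hasDerivAt_pow n x
  have h2 : HasDerivAt (fun x : ℝ => -x^2/2) (-x) x := by
    have : HasDerivAt (fun x : ℝ => x^2) (2*x) x := by
      simpa using hasDerivAt_pow 2 x
    exact (this.neg.div_const 2).congr_deriv (by ring)
  have h3 := (h2.exp)
  have := h1.mul h3
  exact this.congr_deriv (by ring)

lemma Igauss_rec (n : ℕ) : Igauss (n+2) = (n+1) * Igauss n := by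
  have key : ∫ x : ℝ, (((n+1 : ℕ) : ℝ) * x ^ n * Real.exp (-x^2/2)
      - x ^ (n+2) * Real.exp (-x^2/2)) = 0 - 0 := by
    apply integral_of_hasDerivAt_of_tendsto (f := fun x : ℝ => x ^ (n+1) * Real.exp (-x^2/2))
    · intro x
      have := hasDerivAt_pow_exp (n+1) x
      simpa using this
    · exact (((integrable_pow_exp n).const_mul (((n+1:ℕ):ℝ))).sub
        (integrable_pow_exp (n+2))).congr
        (Filter.Eventually.of_forall fun x => by simp [Pi.sub_def]; ring)
    · exact tendsto_pow_exp_atBot (n+1)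
    · exact tendsto_pow_exp_atTop (n+1)
  rw [sub_zero] at key
  have := integral_sub ((integrable_pow_exp n).const_mul (((n+1:ℕ):ℝ))) (integrable_pow_exp (n+2))
  rw [show (fun x : ℝ => ((n+1:ℕ):ℝ) * x ^ n * Real.exp (-x^2/2)
      - x ^ (n+2) * Real.exp (-x^2/2)) = fun x => ((n+1:ℕ):ℝ) * (x ^ n * Real.exp (-x^2/2))
      - x ^ (n+2) * Real.exp (-x^2/2) from funext fun x => by ring] at key
  rw [this] at key
  rw [integral_const_mul] at key
  have : Igauss (n+2) = ((n+1:ℕ):ℝ) * Igauss n := by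
    unfold Igauss; linarith [key]
  rw [this]; push_cast; ring

lemma Igauss_zero : Igauss 0 = Real.sqrt (2 * Real.pi) := by
  unfold Igauss
  simp only [pow_zero, one_mul]
  have := integral_gaussian (1/2 : ℝ)
  rw [show (fun x : ℝ => Real.exp (-x^2/2)) = fun x : ℝ => Real.exp (-(1/2) * x^2) from
    funext fun x => by ring_nf] at *
  rw [this]
  congr 1
  ring

lemma Igauss_one : Igauss 1 = 0 := by
  have key : ∫ x : ℝ, (((0:ℝ)) * x ^ 0 * Real.exp (-x^2/2)
      - x ^ 1 * Real.exp (-x^2/2)) = 0 - 0 := by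
    apply integral_of_hasDerivAt_of_tendsto (f := fun x : ℝ => x ^ 0 * Real.exp (-x^2/2))
    · intro x
      have := hasDerivAt_pow_exp 0 x
      simpa using this
    · exact (((integrable_pow_exp 0).const_mul (0:ℝ)).sub
        (integrable_pow_exp 1)).congr
        (Filter.Eventually.of_forall fun x => by simp [Pi.sub_def])
    · exact tendsto_pow_exp_atBot 0
    · exact tendsto_pow_exp_atTop 0
  simp only [zero_mul, zero_sub, sub_zero] at key
  rw [integral_neg] at key
  have : Igauss 1 = 0 := by unfold Igauss; simpa using neg_eq_zero.1 key
  exact this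

lemma Igauss_two : Igauss 2 = Real.sqrt (2 * Real.pi) := by
  have := Igauss_rec 0; rw [Igauss_zero] at this; simpa using this
lemma Igauss_three : Igauss 3 = 0 := by
  have := Igauss_rec 1; rw [Igauss_one] at this; simpa using this
lemma Igauss_four : Igauss 4 = 3 * Real.sqrt (2 * Real.pi) := by
  have := Igauss_rec 2; rw [Igauss_two] at this; norm_num at this
  rw [show Real.sqrt (2*Real.pi) = Real.sqrt 2 * Real.sqrt Real.pi from
    Real.sqrt_mul (by norm_num) _]
  linarith
lemma Igauss_five : Igauss 5 = 0 := by
  have := Igauss_rec 3; rw [Igauss_three] at this; simpa using this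
lemma Igauss_six : Igauss 6 = 15 * Real.sqrt (2 * Real.pi) := by
  have := Igauss_rec 4; rw [Igauss_four] at this; norm_num at this
  rw [show Real.sqrt (2*Real.pi) = Real.sqrt 2 * Real.sqrt Real.pi from
    Real.sqrt_mul (by norm_num) _]
  linarith


lemma gaussPDF_eq (x : ℝ) :
    gaussianPDFReal 0 1 x = (Real.sqrt (2 * Real.pi))⁻¹ * Real.exp (-x^2/2) := by
  simp [gaussianPDFReal]

lemma stdGauss_eq : gaussianReal 0 1 =
    volume.withDensity (fun x => ((gaussianPDFReal 0 1 x).toNNReal : ℝ≥0∞)) := by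
  rw [gaussianReal_of_var_ne_zero 0 one_ne_zero]
  rfl

lemma integral_stdGauss (f : ℝ → ℝ) :
    ∫ x, f x ∂(gaussianReal 0 1) = ∫ x, gaussianPDFReal 0 1 x * f x := by
  rw [stdGauss_eq]
  rw [integral_withDensity_eq_integral_smul
    ((measurable_gaussianPDFReal 0 1).real_toNNReal) f]
  congr 1
  ext x
  rw [NNReal.smul_def, smul_eq_mul, Real.coe_toNNReal _ (gaussianPDFReal_nonneg 0 1 x)]

lemma integrable_stdGauss_iff (f : ℝ → ℝ) :
    Integrable f (gaussianReal 0 1) ↔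
      Integrable (fun x => gaussianPDFReal 0 1 x * f x) volume := by
  rw [stdGauss_eq,
    integrable_withDensity_iff_integrable_smul ((measurable_gaussianPDFReal 0 1).real_toNNReal)]
  constructor <;> intro h <;> apply h.congr <;>
    refine Filter.Eventually.of_forall fun x => ?_ <;>
    simp only [NNReal.smul_def, smul_eq_mul,
      Real.coe_toNNReal _ (gaussianPDFReal_nonneg 0 1 x)]

lemma integrable_pow_stdGauss (n : ℕ) :
    Integrable (fun x : ℝ => x ^ n) (gaussianReal 0 1) := by
  rw [integrable_stdGauss_iff]
  have h : (fun x : ℝ => gaussianPDFReal 0 1 x * x ^ n)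
      = fun x : ℝ => (Real.sqrt (2*Real.pi))⁻¹ * (x ^ n * Real.exp (-x^2/2)) :=
    funext fun x => by rw [gaussPDF_eq]; ring
  rw [h]
  exact (integrable_pow_exp n).const_mul _

noncomputable def gmom (n : ℕ) : ℝ := ∫ x, x ^ n ∂(gaussianReal 0 1)

lemma gmom_eq (n : ℕ) : gmom n = (Real.sqrt (2 * Real.pi))⁻¹ * Igauss n := by
  rw [gmom, integral_stdGauss, Igauss, ← integral_const_mul]
  congr 1
  ext x
  rw [gaussPDF_eq]
  ring



lemma sqrt_two_pi_ne : Real.sqrt (2 * Real.pi) ≠ 0 := by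
  refine Real.sqrt_ne_zero'.2 ?_
  positivity

lemma gmom_zero : gmom 0 = 1 := by
  rw [gmom_eq, Igauss_zero, inv_mul_cancel₀ sqrt_two_pi_ne]
lemma gmom_one : gmom 1 = 0 := by rw [gmom_eq, Igauss_one, mul_zero]
lemma gmom_two : gmom 2 = 1 := by
  rw [gmom_eq, Igauss_two, inv_mul_cancel₀ sqrt_two_pi_ne]
lemma gmom_three : gmom 3 = 0 := by rw [gmom_eq, Igauss_three, mul_zero]
lemma gmom_four : gmom 4 = 3 := by
  rw [gmom_eq, Igauss_four, ← mul_assoc, mul_comm _ (3:ℝ), mul_assoc,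
    inv_mul_cancel₀ sqrt_two_pi_ne, mul_one]
lemma gmom_five : gmom 5 = 0 := by rw [gmom_eq, Igauss_five, mul_zero]
lemma gmom_six : gmom 6 = 15 := by
  rw [gmom_eq, Igauss_six, ← mul_assoc, mul_comm _ (15:ℝ), mul_assoc,
    inv_mul_cancel₀ sqrt_two_pi_ne, mul_one]

/-- one-dimensional moments of `1 + x/√L`. -/

noncomputable def gm (L : ℕ) (j : ℕ) : ℝ :=
  ∫ x, (1 + x / Real.sqrt L) ^ j ∂(gaussianReal 0 1)

lemma integrable_base_pow (L : ℕ) (j : ℕ) :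
    Integrable (fun x : ℝ => (1 + x / Real.sqrt L) ^ j) (gaussianReal 0 1) := by
  have hpt : (fun x : ℝ => (1 + x / Real.sqrt L) ^ j)
      = fun x => ∑ i ∈ Finset.range (j+1),
          ((j.choose i : ℝ) * ((Real.sqrt L)⁻¹) ^ i) * x ^ i := by
    funext x
    rw [add_comm (1:ℝ) _, add_pow]
    refine Finset.sum_congr rfl fun i _ => ?_
    rw [div_eq_mul_inv, mul_pow, one_pow]
    ring
  rw [hpt]
  exact integrable_finset_sum _ fun i _ => (integrable_pow_stdGauss i).const_mul _

lemma gm_eq (L : ℕ) (j : ℕ) :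
    gm L j = ∑ i ∈ Finset.range (j+1),
      (j.choose i : ℝ) * ((Real.sqrt L)⁻¹) ^ i * gmom i := by
  unfold gm
  have hpt : ∀ x : ℝ, (1 + x / Real.sqrt L) ^ j
      = ∑ i ∈ Finset.range (j+1),
          ((j.choose i : ℝ) * ((Real.sqrt L)⁻¹) ^ i) * x ^ i := by
    intro x
    rw [add_comm (1:ℝ) _, add_pow]
    refine Finset.sum_congr rfl fun i _ => ?_
    rw [div_eq_mul_inv, mul_pow, one_pow]
    ring
  rw [show (fun x : ℝ => (1 + x / Real.sqrt L) ^ j)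
      = fun x => ∑ i ∈ Finset.range (j+1),
          ((j.choose i : ℝ) * ((Real.sqrt L)⁻¹) ^ i) * x ^ i from funext hpt]
  rw [integral_finset_sum _ fun i _ => (integrable_pow_stdGauss i).const_mul _]
  refine Finset.sum_congr rfl fun i _ => ?_
  rw [integral_const_mul]
  rfl

lemma sqrtL_inv_sq (L : ℕ) (hL : 1 ≤ L) : ((Real.sqrt L)⁻¹) ^ 2 = 1 / (L:ℝ) := by
  rw [← Real.sqrt_inv, Real.sq_sqrt (by positivity), one_div]

lemma gm_zero (L : ℕ) : gm L 0 = 1 := by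
  rw [gm_eq]; simp [gmom_zero]

lemma gm_one (L : ℕ) : gm L 1 = 1 := by
  rw [gm_eq]
  simp [Finset.sum_range_succ, gmom_zero, gmom_one]

lemma gm_two (L : ℕ) (hL : 1 ≤ L) : gm L 2 = 1 + 1/(L:ℝ) := by
  rw [gm_eq]
  simp [Finset.sum_range_succ, gmom_zero, gmom_one, gmom_two, sqrtL_inv_sq L hL]

lemma gm_three (L : ℕ) (hL : 1 ≤ L) : gm L 3 = 1 + 3/(L:ℝ) := by
  rw [gm_eq]
  simp [Finset.sum_range_succ, gmom_zero, gmom_one, gmom_two, gmom_three, sqrtL_inv_sq L hL]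
  ring

lemma gm_four (L : ℕ) (hL : 1 ≤ L) : gm L 4 = 1 + 6/(L:ℝ) + 3/(L:ℝ)^2 := by
  rw [gm_eq]
  have h4 : ((Real.sqrt L) ^ 4)⁻¹ = 1/(L:ℝ)^2 := by
    rw [show 4 = 2*2 from rfl, pow_mul, Real.sq_sqrt (by positivity : (0:ℝ) ≤ (L:ℝ))]; ring
  simp [Finset.sum_range_succ, gmom_zero, gmom_one, gmom_two, gmom_three, gmom_four,
    sqrtL_inv_sq L hL]
  rw [h4]
  norm_num [Nat.choose]
  ring

lemma gm_five (L : ℕ) (hL : 1 ≤ L) : gm L 5 = 1 + 10/(L:ℝ) + 15/(L:ℝ)^2 := by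
  rw [gm_eq]
  have h4 : ((Real.sqrt L) ^ 4)⁻¹ = 1/(L:ℝ)^2 := by
    rw [show 4 = 2*2 from rfl, pow_mul, Real.sq_sqrt (by positivity : (0:ℝ) ≤ (L:ℝ))]; ring
  simp [Finset.sum_range_succ, gmom_zero, gmom_one, gmom_two, gmom_three, gmom_four,
    gmom_five, sqrtL_inv_sq L hL]
  rw [h4]
  norm_num [Nat.choose]
  ring

lemma gm_six (L : ℕ) (hL : 1 ≤ L) :
    gm L 6 = 1 + 15/(L:ℝ) + 45/(L:ℝ)^2 + 15/(L:ℝ)^3 := by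
  rw [gm_eq]
  have h4 : ((Real.sqrt L) ^ 4)⁻¹ = 1/(L:ℝ)^2 := by
    rw [show 4 = 2*2 from rfl, pow_mul, Real.sq_sqrt (by positivity : (0:ℝ) ≤ (L:ℝ))]; ring
  have h6 : ((Real.sqrt L) ^ 6)⁻¹ = 1/(L:ℝ)^3 := by
    rw [show 6 = 2*3 from rfl, pow_mul, Real.sq_sqrt (by positivity : (0:ℝ) ≤ (L:ℝ))]; ring
  simp [Finset.sum_range_succ, gmom_zero, gmom_one, gmom_two, gmom_three, gmom_four,
    gmom_five, gmom_six, sqrtL_inv_sq L hL]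
  rw [h4, h6]
  norm_num [Nat.choose]
  ring




section Main

variable (x₀ V y : ℝ) (L : ℕ)

/-- exponent pattern -/
def expo (p : ℕ) (l l' k : Fin L) : ℕ :=
  p + (if k = l then 0 else 2) + (if k = l' then 0 else 2)

noncomputable def Phi (p : ℕ) (l l' : Fin L) (ω : Fin L → ℝ) : ℝ :=
  ∏ k, (1 + ω k / Real.sqrt L) ^ (expo L p l l' k)

lemma integral_Phi (hL : 1 ≤ L) (p : ℕ) (l l' : Fin L) :
    ∫ ω, Phi L p l l' ω ∂(stdGaussPi L) =
      if l = l' then gm L p * gm L (p+4) ^ (L-1)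
      else gm L (p+2) ^ 2 * gm L (p+4) ^ (L-2) := by
  letI : MeasureSpace ℝ := ⟨gaussianReal 0 1⟩
  haveI : SigmaFinite (volume : Measure ℝ) := by
    change SigmaFinite (gaussianReal 0 1); infer_instance
  have hμ : stdGaussPi L = (volume : Measure (Fin L → ℝ)) := rfl
  rw [hμ]
  have key : ∫ ω : Fin L → ℝ, Phi L p l l' ω
      = ∏ k, ∫ x : ℝ, (1 + x / Real.sqrt L) ^ (expo L p l l' k) := by
    exact integral_fintype_prod_eq_prod
      (fun k (x : ℝ) => (1 + x / Real.sqrt L) ^ (expo L p l l' k))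
  rw [key]
  have hgm : ∀ k, (∫ x : ℝ, (1 + x / Real.sqrt L) ^ (expo L p l l' k))
      = gm L (expo L p l l' k) := fun k => rfl
  simp only [hgm]
  rcases eq_or_ne l l' with h | h
  · subst h
    rw [if_pos rfl]
    rw [← Finset.mul_prod_erase Finset.univ _ (Finset.mem_univ l)]
    congr 1
    · simp [expo]
    · rw [Finset.prod_congr rfl (fun k hk => ?_), Finset.prod_const,
        Finset.card_erase_of_mem (Finset.mem_univ l), Finset.card_univ, Fintype.card_fin]
      have hk' : k ≠ l := Finset.ne_of_mem_erase hk
      simp [expo, hk']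
  · rw [if_neg h]
    have hl' : l' ∈ Finset.univ.erase l := Finset.mem_erase.2 ⟨Ne.symm h, Finset.mem_univ _⟩
    rw [← Finset.mul_prod_erase Finset.univ _ (Finset.mem_univ l),
      ← Finset.mul_prod_erase _ _ hl']
    have e1 : expo L p l l' l = p + 2 := by simp [expo, h]
    have e2 : expo L p l l' l' = p + 2 := by simp [expo, Ne.symm h]
    rw [e1, e2]
    have e3 : ∀ k ∈ (Finset.univ.erase l).erase l',
        gm L (expo L p l l' k) = gm L (p+4) := by
      intro k hk
      have hk1 : k ≠ l' := Finset.ne_of_mem_erase hk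
      have hk2 : k ≠ l := Finset.ne_of_mem_erase (Finset.mem_of_mem_erase hk)
      simp [expo, hk1, hk2]
    rw [Finset.prod_congr rfl e3, Finset.prod_const,
      Finset.card_erase_of_mem hl', Finset.card_erase_of_mem (Finset.mem_univ l),
      Finset.card_univ, Fintype.card_fin, Nat.sub_sub]
    ring

lemma integrable_Phi (p : ℕ) (l l' : Fin L) :
    Integrable (Phi L p l l') (stdGaussPi L) := by
  letI : MeasureSpace ℝ := ⟨gaussianReal 0 1⟩
  haveI : SigmaFinite (volume : Measure ℝ) := by
    change SigmaFinite (gaussianReal 0 1); infer_instance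
  have hμ : stdGaussPi L = (volume : Measure (Fin L → ℝ)) := rfl
  rw [hμ]
  exact Integrable.fintype_prod_dep
    (f := fun k (x : ℝ) => (1 + x / Real.sqrt L) ^ (expo L p l l' k))
    (fun k => integrable_base_pow L _)

lemma ALin_sq_eq (ω : Fin L → ℝ) :
    (ALin x₀ V y L ω)^2 = (x₀^4 / L) * ∑ l, ∑ l',
      ((V*x₀)^2 * Phi L 2 l l' ω + (-(2*(V*x₀)*y)) * Phi L 1 l l' ω
        + y^2 * Phi L 0 l l' ω) := by
  set b : Fin L → ℝ := fun k => 1 + ω k / Real.sqrt L with hb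
  have hQ : ∀ l : Fin L, (∏ k ∈ Finset.univ.erase l, (b k)^2)
      = ∏ k, (b k)^(if k = l then 0 else 2) := by
    intro l
    rw [← Finset.prod_erase Finset.univ
      (f := fun k => (b k)^(if k = l then 0 else 2)) (a := l) (by simp)]
    exact Finset.prod_congr rfl fun k hk => by
      rw [if_neg (Finset.ne_of_mem_erase hk)]
  have hPhi : ∀ (p : ℕ) (l l' : Fin L), Phi L p l l' ω
      = (∏ k, b k)^p * (∏ k, (b k)^(if k = l then 0 else 2))
        * (∏ k, (b k)^(if k = l' then 0 else 2)) := by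
    intro p l l'
    rw [← Finset.prod_pow, ← Finset.prod_mul_distrib, ← Finset.prod_mul_distrib]
    exact Finset.prod_congr rfl fun k _ => by rw [← pow_add, ← pow_add]; rfl
  have hsq : (1 / Real.sqrt L)^2 = 1/(L:ℝ) := by
    rw [div_pow, one_pow, Real.sq_sqrt (Nat.cast_nonneg L)]
  have h1 : (ALin x₀ V y L ω)^2
      = (x₀^4/L) * ((V*x₀*(∏ k, b k) - y)^2 *
          ∑ l, ∑ l', ((∏ k ∈ Finset.univ.erase l, (b k)^2)
            * (∏ k ∈ Finset.univ.erase l', (b k)^2))) := by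
    rw [ALin, ← Finset.sum_mul_sum]
    have expand : ((1 / Real.sqrt L) * (V * x₀ * (∏ k, b k) - y) * x₀ ^ 2 *
        ∑ l, ∏ k ∈ Finset.univ.erase l, (b k) ^ 2)^2
        = (1 / Real.sqrt L)^2 * ((V*x₀*(∏ k, b k) - y)^2 * (x₀^4 *
          ((∑ l, ∏ k ∈ Finset.univ.erase l, (b k) ^ 2) *
           (∑ l, ∏ k ∈ Finset.univ.erase l, (b k) ^ 2)))) := by ring
    rw [expand, hsq]
    ring
  rw [h1]
  congr 1
  rw [Finset.mul_sum]
  refine Finset.sum_congr rfl fun l _ => ?_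
  rw [Finset.mul_sum]
  refine Finset.sum_congr rfl fun l' _ => ?_
  rw [hPhi 2 l l', hPhi 1 l l', hPhi 0 l l', hQ l, hQ l']
  ring

lemma integral_ALin_sq (hL : 1 ≤ L) :
    ∫ ω, (ALin x₀ V y L ω)^2 ∂(stdGaussPi L)
      = x₀^4 * ((
        (V*x₀)^2 * (gm L 2 * gm L 6^(L-1)) + (-(2*(V*x₀)*y)) * (gm L 1 * gm L 5^(L-1))
          + y^2 * (gm L 0 * gm L 4^(L-1)))
        + ((L:ℝ)-1) * ((V*x₀)^2 * (gm L 4^2 * gm L 6^(L-2))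
          + (-(2*(V*x₀)*y)) * (gm L 3^2 * gm L 5^(L-2))
          + y^2 * (gm L 2^2 * gm L 4^(L-2)))) := by
  set TD : ℝ := (V*x₀)^2 * (gm L 2 * gm L 6^(L-1))
      + (-(2*(V*x₀)*y)) * (gm L 1 * gm L 5^(L-1)) + y^2 * (gm L 0 * gm L 4^(L-1)) with hTD
  set TO : ℝ := (V*x₀)^2 * (gm L 4^2 * gm L 6^(L-2))
      + (-(2*(V*x₀)*y)) * (gm L 3^2 * gm L 5^(L-2)) + y^2 * (gm L 2^2 * gm L 4^(L-2)) with hTO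
  have h1 : ∫ ω, (ALin x₀ V y L ω)^2 ∂(stdGaussPi L)
      = ∫ ω, (x₀^4 / L) * ∑ l, ∑ l',
          ((V*x₀)^2 * Phi L 2 l l' ω + (-(2*(V*x₀)*y)) * Phi L 1 l l' ω
            + y^2 * Phi L 0 l l' ω) ∂(stdGaussPi L) :=
    integral_congr_ae (Filter.Eventually.of_forall fun ω => ALin_sq_eq x₀ V y L ω)
  have hint : ∀ l l' : Fin L, Integrable (fun ω =>
      (V*x₀)^2 * Phi L 2 l l' ω + (-(2*(V*x₀)*y)) * Phi L 1 l l' ω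
        + y^2 * Phi L 0 l l' ω) (stdGaussPi L) := fun l l' =>
    (((integrable_Phi L 2 l l').const_mul _).add
      ((integrable_Phi L 1 l l').const_mul _)).add ((integrable_Phi L 0 l l').const_mul _)
  rw [h1, integral_const_mul, integral_finset_sum _
    (fun l _ => integrable_finset_sum _ (fun l' _ => hint l l'))]
  have h2 : ∀ l : Fin L, (∫ ω, ∑ l', ((V*x₀)^2 * Phi L 2 l l' ω
      + (-(2*(V*x₀)*y)) * Phi L 1 l l' ω + y^2 * Phi L 0 l l' ω) ∂(stdGaussPi L))
      = ((L:ℝ) * TO + (TD - TO)) := by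
    intro l
    rw [integral_finset_sum _ (fun l' _ => hint l l')]
    have h3 : ∀ l' : Fin L, (∫ ω, ((V*x₀)^2 * Phi L 2 l l' ω
        + (-(2*(V*x₀)*y)) * Phi L 1 l l' ω + y^2 * Phi L 0 l l' ω) ∂(stdGaussPi L))
        = TO + (if l = l' then TD - TO else 0) := by
      intro l'
      have i2 : Integrable (fun ω => (V*x₀)^2 * Phi L 2 l l' ω) (stdGaussPi L) :=
        (integrable_Phi L 2 l l').const_mul _
      have i1 : Integrable (fun ω => (-(2*(V*x₀)*y)) * Phi L 1 l l' ω) (stdGaussPi L) :=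
        (integrable_Phi L 1 l l').const_mul _
      have i0 : Integrable (fun ω => y^2 * Phi L 0 l l' ω) (stdGaussPi L) :=
        (integrable_Phi L 0 l l').const_mul _
      have i21 : Integrable (fun ω => (V*x₀)^2 * Phi L 2 l l' ω
          + (-(2*(V*x₀)*y)) * Phi L 1 l l' ω) (stdGaussPi L) := i2.add i1
      rw [integral_add i21 i0, integral_add i2 i1,
        integral_const_mul, integral_const_mul, integral_const_mul,
        integral_Phi L hL 2 l l', integral_Phi L hL 1 l l', integral_Phi L hL 0 l l']
      rcases eq_or_ne l l' with h | h
      · subst h; simp only [eq_self_iff_true, if_true]; ring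
      · simp only [if_neg h]; ring
    rw [Finset.sum_congr rfl (fun l' _ => h3 l'), Finset.sum_add_distrib,
      Finset.sum_const, Finset.sum_ite_eq, if_pos (Finset.mem_univ l),
      Finset.card_univ, Fintype.card_fin, nsmul_eq_mul]
  rw [Finset.sum_congr rfl (fun l _ => h2 l), Finset.sum_const,
    Finset.card_univ, Fintype.card_fin, nsmul_eq_mul]
  have hL0 : (L:ℝ) ≠ 0 := by
    have : (1:ℝ) ≤ (L:ℝ) := by exact_mod_cast hL
    linarith
  field_simp
  ring

end Main

lemma tendsto_poly_pow (b c d : ℝ) (hb : 0 ≤ b) (hc : 0 ≤ c) (hd : 0 ≤ d) (j : ℕ) :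
    Tendsto (fun L : ℕ => (1 + b/L + c/(L:ℝ)^2 + d/(L:ℝ)^3) ^ (L - j))
      atTop (nhds (Real.exp b)) := by
  have h1L : Tendsto (fun L : ℕ => 1/(L:ℝ)) atTop (nhds 0) :=
    tendsto_one_div_atTop_nhds_zero_nat
  -- lower bound function
  have hlo : Tendsto (fun L : ℕ => (1 + b/(L:ℝ)) ^ (L - j)) atTop (nhds (Real.exp b)) := by
    have hnum := Real.tendsto_one_add_div_pow_exp b
    have hden : Tendsto (fun L : ℕ => (1 + b/(L:ℝ)) ^ j) atTop (nhds 1) := by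
      have hb' : Tendsto (fun L : ℕ => b/(L:ℝ)) atTop (nhds 0) := by
        simpa [div_eq_mul_inv] using h1L.const_mul b
      have : Tendsto (fun L : ℕ => 1 + b/(L:ℝ)) atTop (nhds 1) := by
        simpa using tendsto_const_nhds.add hb'
      simpa using this.pow j
    have hq := hnum.div hden one_ne_zero
    rw [div_one] at hq
    apply hq.congr'
    filter_upwards [eventually_ge_atTop (j+1)] with L hL
    have hjL : j ≤ L := le_trans (Nat.le_succ j) hL
    have hbase : (0:ℝ) < 1 + b/(L:ℝ) := by positivity
    show _ = _
    simp only [Pi.div_apply]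
    rw [pow_sub₀ _ (ne_of_gt hbase) hjL, div_eq_mul_inv]
  -- upper bound function
  have hup : Tendsto (fun L : ℕ =>
      Real.exp ((b + c/(L:ℝ) + d/(L:ℝ)^2) * (1 - (j:ℝ)/L))) atTop (nhds (Real.exp b)) := by
    have hinner : Tendsto (fun L : ℕ => (b + c/(L:ℝ) + d/(L:ℝ)^2) * (1 - (j:ℝ)/L))
        atTop (nhds b) := by
      have hc' : Tendsto (fun L : ℕ => c/(L:ℝ)) atTop (nhds 0) := by
        simpa [div_eq_mul_inv] using h1L.const_mul c
      have hd' : Tendsto (fun L : ℕ => d/(L:ℝ)^2) atTop (nhds 0) := by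
        have h2 : Tendsto (fun L : ℕ => 1/(L:ℝ)^2) atTop (nhds 0) := by
          have := h1L.mul h1L
          simpa [one_div, ← mul_inv, ← sq] using this
        simpa [div_eq_mul_inv, one_div] using h2.const_mul d
      have hj : Tendsto (fun L : ℕ => 1 - (j:ℝ)/(L:ℝ)) atTop (nhds 1) := by
        have : Tendsto (fun L : ℕ => (j:ℝ)/(L:ℝ)) atTop (nhds 0) := by
          simpa [div_eq_mul_inv] using h1L.const_mul (j:ℝ)
        simpa using tendsto_const_nhds.sub this
      have := ((tendsto_const_nhds (x := b)).add hc' |>.add hd').mul hj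
      simpa using this
    exact (Real.continuous_exp.tendsto b).comp hinner
  refine tendsto_of_tendsto_of_tendsto_of_le_of_le' hlo hup ?_ ?_
  · filter_upwards [eventually_ge_atTop 1] with L hL
    have hLpos : (0:ℝ) < L := by exact_mod_cast hL
    apply pow_le_pow_left₀ (by positivity)
    have : 0 ≤ c/(L:ℝ)^2 + d/(L:ℝ)^3 := by positivity
    linarith
  · filter_upwards [eventually_ge_atTop (j+1)] with L hL
    have hLpos : (0:ℝ) < L := by
      have : (1:ℕ) ≤ L := le_trans (Nat.le_add_left 1 j) hL
      exact_mod_cast this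
    have hy : (0:ℝ) ≤ b/L + c/(L:ℝ)^2 + d/(L:ℝ)^3 := by positivity
    calc (1 + b/(L:ℝ) + c/(L:ℝ)^2 + d/(L:ℝ)^3) ^ (L - j)
        ≤ Real.exp (b/L + c/(L:ℝ)^2 + d/(L:ℝ)^3) ^ (L - j) := by
          apply pow_le_pow_left₀ (by positivity)
          have := Real.add_one_le_exp (b/L + c/(L:ℝ)^2 + d/(L:ℝ)^3)
          linarith
      _ = Real.exp ((b/L + c/(L:ℝ)^2 + d/(L:ℝ)^3) * ((L:ℝ) - j)) := by
          rw [← Real.exp_nat_mul]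
          congr 1
          have hcast : ((L - j : ℕ) : ℝ) = (L:ℝ) - j := by
            have : j ≤ L := le_trans (Nat.le_succ j) hL
            exact Nat.cast_sub this
          rw [hcast]; ring
      _ = Real.exp ((b + c/(L:ℝ) + d/(L:ℝ)^2) * (1 - (j:ℝ)/L)) := by
          congr 1
          field_simp

/-- `E[A_L²] = Θ(L)`, and consequently
`E[((η/√L)·A_L)²] = Θ(η²)` for any learning rate `η`. -/
theorem stmt_1 (x₀ V y : ℝ) (hx₀ : x₀ ≠ 0) (hVy : (V * x₀, y) ≠ (0, 0)) :
    ∃ K₁ K₂ : ℝ, 0 < K₁ ∧ K₁ ≤ K₂ ∧ ∃ L₀ : ℕ,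
      ∀ L : ℕ, L₀ ≤ L →
        (K₁ * L ≤ ∫ ω, (ALin x₀ V y L ω) ^ 2 ∂(stdGaussPi L)) ∧
        ((∫ ω, (ALin x₀ V y L ω) ^ 2 ∂(stdGaussPi L)) ≤ K₂ * L) ∧
        ∀ η : ℝ,
          K₁ * η ^ 2 ≤ (∫ ω, ((η / Real.sqrt L) * ALin x₀ V y L ω) ^ 2 ∂(stdGaussPi L)) ∧
          (∫ ω, ((η / Real.sqrt L) * ALin x₀ V y L ω) ^ 2 ∂(stdGaussPi L)) ≤ K₂ * η ^ 2 := by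
  set u : ℝ := V * x₀ with hu
  set q : ℝ := u^2 * Real.exp 15 + (-(2*u*y)) * Real.exp 10 + y^2 * Real.exp 6 with hq
  -- positivity of q
  have hqpos : 0 < q := by
    have h1 : Real.exp (15/2 : ℝ) * Real.exp (15/2 : ℝ) = Real.exp 15 := by
      rw [← Real.exp_add]; norm_num
    have h2 : Real.exp (15/2 : ℝ) * Real.exp (5/2 : ℝ) = Real.exp 10 := by
      rw [← Real.exp_add]; norm_num
    have h3 : Real.exp (5/2 : ℝ) * Real.exp (5/2 : ℝ) = Real.exp 5 := by
      rw [← Real.exp_add]; norm_num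
    have h4 : Real.exp 5 < Real.exp 6 := Real.exp_lt_exp.2 (by norm_num)
    have hkey : q = (Real.exp (15/2) * u - Real.exp (5/2) * y)^2
        + (Real.exp 6 - Real.exp 5) * y^2 := by
      rw [hq]
      linear_combination (-(u^2)) * h1 + (2*u*y) * h2 - y^2 * h3
    rcases eq_or_ne y 0 with hy | hy
    · have hu0 : u ≠ 0 := by
        intro h
        exact hVy (by rw [← hu] at *; exact Prod.ext h hy)
      have : 0 < u^2 := by positivity
      rw [hq, hy]
      have := Real.exp_pos (15:ℝ)
      nlinarith
    · have hy2 : 0 < y^2 := by positivity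
      rw [hkey]
      nlinarith [sq_nonneg (Real.exp (15/2) * u - Real.exp (5/2) * y)]
  set c : ℝ := x₀^4 * q with hc
  have hx4 : 0 < x₀^4 := by positivity
  have hcpos : 0 < c := by rw [hc]; positivity
  -- limits
  have h1L : Tendsto (fun L : ℕ => 1/(L:ℝ)) atTop (nhds 0) :=
    tendsto_one_div_atTop_nhds_zero_nat
  have hgm6 : ∀ j : ℕ, Tendsto (fun L : ℕ => gm L 6 ^ (L - j)) atTop (nhds (Real.exp 15)) := by
    intro j
    apply (tendsto_poly_pow 15 45 15 (by norm_num) (by norm_num) (by norm_num) j).congr'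
    filter_upwards [eventually_ge_atTop 1] with L hL
    rw [gm_six L hL]
  have hgm5 : ∀ j : ℕ, Tendsto (fun L : ℕ => gm L 5 ^ (L - j)) atTop (nhds (Real.exp 10)) := by
    intro j
    apply (tendsto_poly_pow 10 15 0 (by norm_num) (by norm_num) (by norm_num) j).congr'
    filter_upwards [eventually_ge_atTop 1] with L hL
    rw [gm_five L hL]
    norm_num
  have hgm4p : ∀ j : ℕ, Tendsto (fun L : ℕ => gm L 4 ^ (L - j)) atTop (nhds (Real.exp 6)) := by
    intro j
    apply (tendsto_poly_pow 6 3 0 (by norm_num) (by norm_num) (by norm_num) j).congr'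
    filter_upwards [eventually_ge_atTop 1] with L hL
    rw [gm_four L hL]
    norm_num
  have hgm0 : Tendsto (fun L : ℕ => gm L 0) atTop (nhds 1) :=
    tendsto_const_nhds.congr (fun L => (gm_zero L).symm)
  have hgm1 : Tendsto (fun L : ℕ => gm L 1) atTop (nhds 1) :=
    tendsto_const_nhds.congr (fun L => (gm_one L).symm)
  have hgm2 : Tendsto (fun L : ℕ => gm L 2) atTop (nhds 1) := by
    have : Tendsto (fun L : ℕ => 1 + 1/(L:ℝ)) atTop (nhds 1) := by
      simpa using tendsto_const_nhds.add h1L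
    apply this.congr'
    filter_upwards [eventually_ge_atTop 1] with L hL
    rw [gm_two L hL]
  have hgm3 : Tendsto (fun L : ℕ => gm L 3) atTop (nhds 1) := by
    have h3L : Tendsto (fun L : ℕ => (3:ℝ)/(L:ℝ)) atTop (nhds 0) := by
      simpa [div_eq_mul_inv] using h1L.const_mul (3:ℝ)
    have : Tendsto (fun L : ℕ => 1 + 3/(L:ℝ)) atTop (nhds 1) := by
      simpa using tendsto_const_nhds.add h3L
    apply this.congr'
    filter_upwards [eventually_ge_atTop 1] with L hL
    rw [gm_three L hL]
  have hgm4 : Tendsto (fun L : ℕ => gm L 4) atTop (nhds 1) := by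
    have h6L : Tendsto (fun L : ℕ => (6:ℝ)/(L:ℝ)) atTop (nhds 0) := by
      simpa [div_eq_mul_inv] using h1L.const_mul (6:ℝ)
    have h3L2 : Tendsto (fun L : ℕ => (3:ℝ)/(L:ℝ)^2) atTop (nhds 0) := by
      have h2 : Tendsto (fun L : ℕ => 1/(L:ℝ)^2) atTop (nhds 0) := by
        have := h1L.mul h1L
        simpa [one_div, ← mul_inv, ← sq] using this
      simpa [div_eq_mul_inv, one_div] using h2.const_mul (3:ℝ)
    have : Tendsto (fun L : ℕ => 1 + 6/(L:ℝ) + 3/(L:ℝ)^2) atTop (nhds 1) := by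
      have := (tendsto_const_nhds (x := (1:ℝ))).add h6L |>.add h3L2
      simpa using this
    apply this.congr'
    filter_upwards [eventually_ge_atTop 1] with L hL
    rw [gm_four L hL]
  -- TD and TO limits
  set TD : ℕ → ℝ := fun L => u^2 * (gm L 2 * gm L 6^(L-1)) + (-(2*u*y)) * (gm L 1 * gm L 5^(L-1))
      + y^2 * (gm L 0 * gm L 4^(L-1)) with hTDdef
  set TO : ℕ → ℝ := fun L => u^2 * (gm L 4^2 * gm L 6^(L-2))
      + (-(2*u*y)) * (gm L 3^2 * gm L 5^(L-2)) + y^2 * (gm L 2^2 * gm L 4^(L-2)) with hTOdef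
  have hTD : Tendsto TD atTop (nhds q) := by
    have := (((hgm2.mul (hgm6 1)).const_mul (u^2)).add
        ((hgm1.mul (hgm5 1)).const_mul (-(2*u*y)))).add
        ((hgm0.mul (hgm4p 1)).const_mul (y^2))
    rw [hTDdef]
    convert this using 2
    rw [hq]; ring
  have hTO : Tendsto TO atTop (nhds q) := by
    have := ((((hgm4.pow 2).mul (hgm6 2)).const_mul (u^2)).add
        (((hgm3.pow 2).mul (hgm5 2)).const_mul (-(2*u*y)))).add
        (((hgm2.pow 2).mul (hgm4p 2)).const_mul (y^2))
    rw [hTOdef]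
    convert this using 2
    rw [hq]; ring
  -- main limit
  have hT : Tendsto (fun L : ℕ => (∫ ω, (ALin x₀ V y L ω)^2 ∂(stdGaussPi L)) / L)
      atTop (nhds c) := by
    have hF : Tendsto (fun L : ℕ => x₀^4 * (TD L * (1/(L:ℝ)) + (1 - 1/(L:ℝ)) * TO L))
        atTop (nhds (x₀^4 * (q * 0 + (1 - 0) * q))) :=
      ((hTD.mul h1L).add ((tendsto_const_nhds.sub h1L).mul hTO)).const_mul (x₀^4)
    rw [show x₀^4 * (q * 0 + (1 - 0) * q) = c by rw [hc]; ring] at hF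
    apply hF.congr'
    filter_upwards [eventually_ge_atTop 1] with L hL
    have hLpos : (0:ℝ) < L := by exact_mod_cast hL
    rw [integral_ALin_sq x₀ V y L hL]
    rw [hTDdef, hTOdef, hu]
    field_simp
    try ring
  -- extract bounds
  refine ⟨c/2, c*2, by linarith, by linarith, ?_⟩
  have hIoo : ∀ᶠ L : ℕ in atTop,
      (∫ ω, (ALin x₀ V y L ω)^2 ∂(stdGaussPi L)) / L ∈ Set.Ioo (c/2) (c*2) :=
    hT.eventually (Ioo_mem_nhds (by linarith) (by linarith))
  rcases (hIoo.and (eventually_ge_atTop 1)).exists_forall_of_atTop with ⟨L₀, hL₀⟩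
  refine ⟨L₀, fun L hL => ?_⟩
  obtain ⟨hmem, hL1⟩ := hL₀ L hL
  have hLpos : (0:ℝ) < L := by exact_mod_cast hL1
  set E : ℝ := ∫ ω, (ALin x₀ V y L ω)^2 ∂(stdGaussPi L) with hE
  obtain ⟨ha, hb⟩ := hmem
  have hlow : c/2 * L ≤ E := by
    rw [lt_div_iff₀ hLpos] at ha
    exact le_of_lt ha
  have hhigh : E ≤ c*2 * L := by
    rw [div_lt_iff₀ hLpos] at hb
    linarith
  refine ⟨hlow, hhigh, fun η => ?_⟩
  have hscale : (∫ ω, ((η / Real.sqrt L) * ALin x₀ V y L ω) ^ 2 ∂(stdGaussPi L))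
      = (η^2 / L) * E := by
    rw [hE, ← integral_const_mul]
    apply integral_congr_ae
    refine Filter.Eventually.of_forall fun ω => ?_
    show ((η / Real.sqrt L) * ALin x₀ V y L ω)^2 = η^2/(L:ℝ) * (ALin x₀ V y L ω)^2
    rw [mul_pow, div_pow, Real.sq_sqrt (Nat.cast_nonneg L)]
  rw [hscale]
  constructor
  · calc c/2 * η^2 = (η^2/L) * (c/2 * L) := by field_simp
      _ ≤ (η^2/L) * E := by
          apply mul_le_mul_of_nonneg_left hlow
          positivity
  · calc (η^2/L) * E ≤ (η^2/L) * (c*2*L) := by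
          apply mul_le_mul_of_nonneg_left hhigh
          positivity
      _ = c*2 * η^2 := by field_simp
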